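/- Let $0 < \alpha_0 < \bar\varrho/2$ and let $h \in C^1[0,\bar\varrho)$ with $h(0)=0$, $h'>0$ on $(0,\bar\varrho)$, $\lim_{\varrho\to\bar\varrho^-} h(\varrho) = +\infty$, $H(\varrho) = \varrho\int_{\bar\varrho/2}^{\varrho} h(z)/z^2\,dz$. Then there exist $\alpha_1 \in (0,\alpha_0)$ and $c>0$ such that for all $r \in [\alpha_0, \bar\varrho - \alpha_0]$ and all $\varrho \in [0,\bar\varrho)$: (i) if $\alpha_1 \leq \varrho \leq \bar\varrho - \alpha_1$ then $H(\varrho)-H(r)-H'(r)(\varrho - r) \geq c(\varrho - r)^2$; (ii) if $0 \leq \varrho \leq \alpha_1$ then $H(\varrho)-H(r)-H'(r)(\varrho - r) \geq h(r)/2$; (iii) if $\bar\varrho - \alpha_1 \leq \varrho < \bar\varrho$ then $H(\varrho)-H(r)-H'(r)(\varrho - r) \geq H(\varrho)/2$. -/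

import Mathlib

set_option maxHeartbeats 1000000

open Filter Set MeasureTheory intervalIntegral

private lemma kappa_eq (c₀ ϱbar β X : ℝ) (h1 : ϱbar ≠ 0) (h2 : β - 1 ≠ 0) :
    c₀ / (2 * ϱbar * (β - 1)) * X = ϱbar / 2 * (c₀ / ϱbar ^ 2 * (X / (β - 1))) := by
  field_simp

theorem stmt11 (ϱbar α₀ : ℝ) (hϱ : 0 < ϱbar) (hα₀ : 0 < α₀) (hα₀' : α₀ < ϱbar / 2)
    (h : ℝ → ℝ) (hh : ContDiffOn ℝ 1 h (Set.Ico 0 ϱbar)) (h0 : h 0 = 0)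
    (hh' : ∀ x ∈ Set.Ioo (0:ℝ) ϱbar, 0 < deriv h x)
    (hblow : Tendsto h (nhdsWithin ϱbar (Set.Iio ϱbar)) atTop)
    (H : ℝ → ℝ) (hH : ∀ ρ : ℝ, H ρ = ρ * ∫ z in (ϱbar / 2)..ρ, h z / z ^ 2)
    (β : ℝ) (hβ : 5 / 2 < β)
    (hliminf : ∃ c > 0, ∀ᶠ ρ in nhdsWithin ϱbar (Set.Iio ϱbar),
        c ≤ h ρ * (ϱbar - ρ) ^ β) :
    ∃ α₁ ∈ Set.Ioo (0:ℝ) α₀, ∃ c > 0,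
      ∀ r ∈ Set.Icc α₀ (ϱbar - α₀), ∀ ρ ∈ Set.Ico (0:ℝ) ϱbar,
        (α₁ ≤ ρ → ρ ≤ ϱbar - α₁ →
          H ρ - H r - deriv H r * (ρ - r) ≥ c * (ρ - r) ^ 2) ∧
        (ρ ≤ α₁ →
          H ρ - H r - deriv H r * (ρ - r) ≥ h r / 2) ∧
        (ϱbar - α₁ ≤ ρ →
          H ρ - H r - deriv H r * (ρ - r) ≥ H ρ / 2) := by
  obtain ⟨c₀, hc₀, hev⟩ := hliminf
  have hb2 : ϱbar / 2 ∈ Set.Ioo (0:ℝ) ϱbar := ⟨by linarith, by linarith⟩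
  obtain ⟨I, hIdef⟩ : ∃ I' : ℝ → ℝ, I' = fun ρ => ∫ z in (ϱbar/2)..ρ, h z / z ^ 2 := ⟨_, rfl⟩
  have hHI : ∀ ρ, H ρ = ρ * I ρ := by simp only [hIdef]; exact hH
  have hcont : ContinuousOn h (Set.Ico 0 ϱbar) := hh.continuousOn
  have hmem_nhds : ∀ x ∈ Set.Ioo (0:ℝ) ϱbar, Set.Ico 0 ϱbar ∈ nhds x := fun x hx =>
    mem_nhds_iff.2 ⟨Set.Ioo 0 ϱbar, Set.Ioo_subset_Ico_self, isOpen_Ioo, hx⟩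
  have hhx : ∀ x ∈ Set.Ioo (0:ℝ) ϱbar, ContinuousAt h x := fun x hx =>
    (hcont x (Set.Ioo_subset_Ico_self hx)).continuousAt (hmem_nhds x hx)
  have hmono : StrictMonoOn h (Set.Ico 0 ϱbar) :=
    strictMonoOn_of_deriv_pos (convex_Ico 0 ϱbar) hcont (by
      rw [interior_Ico]; exact hh')
  have hpos : ∀ x ∈ Set.Ioo (0:ℝ) ϱbar, 0 < h x := fun x hx => by
    have := hmono ⟨le_rfl, hϱ⟩ ⟨hx.1.le, hx.2⟩ hx.1
    rwa [h0] at this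
  have hgc : ContinuousOn (fun z => h z / z ^ 2) (Set.Ioo 0 ϱbar) := by
    apply ContinuousOn.div (fun x hx => (hhx x hx).continuousWithinAt)
      (continuousOn_pow 2)
    intro x hx
    have : x ≠ 0 := ne_of_gt hx.1
    positivity
  have hgint : ∀ a b : ℝ, a ∈ Set.Ioo (0:ℝ) ϱbar → b ∈ Set.Ioo (0:ℝ) ϱbar →
      IntervalIntegrable (fun z => h z / z ^ 2) volume a b := fun a b ha hb =>
    (hgc.mono (Set.ordConnected_Ioo.uIcc_subset ha hb)).intervalIntegrable
  have hId : ∀ x ∈ Set.Ioo (0:ℝ) ϱbar, HasDerivAt I (h x / x ^ 2) x := by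
    intro x hx
    rw [hIdef]
    exact intervalIntegral.integral_hasDerivAt_right (hgint _ _ hb2 hx)
      (hgc.stronglyMeasurableAtFilter isOpen_Ioo x hx)
      ((hgc x hx).continuousAt (isOpen_Ioo.mem_nhds hx))
  have hHd : ∀ x ∈ Set.Ioo (0:ℝ) ϱbar, HasDerivAt H (I x + h x / x) x := by
    intro x hx
    have hne : x ≠ 0 := ne_of_gt hx.1
    have hd := (hasDerivAt_id x).mul (hId x hx)
    have heq : 1 * I x + id x * (h x / x ^ 2) = I x + h x / x := by
      simp only [id]
      field_simp
    rw [heq] at hd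
    exact HasDerivAt.congr_of_eventuallyEq hd (by filter_upwards with ρ using (hHI ρ))
  have hderivH : ∀ x ∈ Set.Ioo (0:ℝ) ϱbar, deriv H x = I x + h x / x :=
    fun x hx => (hHd x hx).deriv
  obtain ⟨D, hDdef⟩ : ∃ D' : ℝ → ℝ, D' = fun x => I x + h x / x := ⟨_, rfl⟩
  have hident : ∀ x ∈ Set.Ioo (0:ℝ) ϱbar, x * D x - H x = h x := by
    intro x hx
    have hne : x ≠ 0 := ne_of_gt hx.1
    rw [hHI x]
    simp only [hDdef]
    field_simp
    ring
  have hDd : ∀ x ∈ Set.Ioo (0:ℝ) ϱbar, HasDerivAt D (deriv h x / x) x := by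
    intro x hx
    have hne : x ≠ 0 := ne_of_gt hx.1
    have hdh : HasDerivAt h (deriv h x) x :=
      (((hh.differentiableOn one_ne_zero) x (Set.Ioo_subset_Ico_self hx)).differentiableAt
        (hmem_nhds x hx)).hasDerivAt
    have h2 : HasDerivAt (fun y => h y / y) ((deriv h x * x - h x * 1) / x ^ 2) x :=
      hdh.div (hasDerivAt_id x) hne
    have h3 := (hId x hx).fun_add h2
    rw [hDdef]
    refine h3.congr_deriv ?_
    field_simp
    ring
  have hDcont : ContinuousOn D (Set.Ioo 0 ϱbar) := fun x hx =>
    ((hDd x hx).differentiableAt.continuousAt).continuousWithinAt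
  have hdh_cont : ContinuousOn (deriv h) (Set.Ioo 0 ϱbar) :=
    (hh.mono Set.Ioo_subset_Ico_self).continuousOn_deriv_of_isOpen isOpen_Ioo le_rfl
  -- the compact interval for r
  have hsub : Set.Icc α₀ (ϱbar - α₀) ⊆ Set.Ioo 0 ϱbar := fun x hx =>
    ⟨lt_of_lt_of_le hα₀ hx.1, lt_of_le_of_lt hx.2 (by linarith)⟩
  obtain ⟨C, hC⟩ := isCompact_Icc.exists_bound_of_continuousOn (hDcont.mono hsub)
  obtain ⟨K, hKdef⟩ : ∃ K' : ℝ, K' = max C 0 := ⟨_, rfl⟩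
  have hK0 : 0 ≤ K := by rw [hKdef]; exact le_max_right _ _
  have hK : ∀ r ∈ Set.Icc α₀ (ϱbar - α₀), |D r| ≤ K := by
    intro r hr
    rw [hKdef]
    exact le_trans (hC r hr) (le_max_left _ _)
  obtain ⟨M₀, hM₀def⟩ : ∃ M' : ℝ, M' = h (ϱbar / 2) := ⟨_, rfl⟩
  have hM₀ : 0 < M₀ := by rw [hM₀def]; exact hpos _ hb2
  have hhα₀ : 0 < h α₀ := hpos α₀ ⟨hα₀, by linarith⟩
  -- choose δ with h δ < h α₀ / 4
  have hnb : (nhdsWithin (0:ℝ) (Set.Ioo 0 ϱbar)).NeBot :=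
    mem_closure_iff_nhdsWithin_neBot.1 (by
      rw [closure_Ioo (ne_of_lt hϱ)]; exact ⟨le_rfl, hϱ.le⟩)
  have t0 : Tendsto h (nhdsWithin 0 (Set.Ioo 0 ϱbar)) (nhds 0) := by
    have t1 : ContinuousWithinAt h (Set.Ioo 0 ϱbar) 0 :=
      (hcont 0 ⟨le_rfl, hϱ⟩).mono Set.Ioo_subset_Ico_self
    have t2 := t1.tendsto
    rwa [h0] at t2
  obtain ⟨δ, hδh, hδα₀, hδmem⟩ :
      ∃ δ : ℝ, h δ < h α₀ / 4 ∧ δ < α₀ ∧ δ ∈ Set.Ioo (0:ℝ) ϱbar := by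
    have e1 : ∀ᶠ x in nhdsWithin 0 (Set.Ioo 0 ϱbar), h x < h α₀ / 4 :=
      t0.eventually_lt_const (by linarith)
    have e2 : ∀ᶠ x in nhdsWithin 0 (Set.Ioo 0 ϱbar), x < α₀ :=
      eventually_nhdsWithin_of_eventually_nhds (eventually_lt_nhds hα₀)
    have e3 : ∀ᶠ x in nhdsWithin 0 (Set.Ioo 0 ϱbar), x ∈ Set.Ioo (0:ℝ) ϱbar :=
      eventually_mem_nhdsWithin
    exact ((e1.and e2).and e3).exists.imp (fun x hx => ⟨hx.1.1, hx.1.2, hx.2⟩)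
  -- extract the blow-up region
  obtain ⟨a₀, ha₀, hIoo⟩ := mem_nhdsLT_iff_exists_Ioo_subset.1 hev
  obtain ⟨a', ha'def⟩ : ∃ x : ℝ, x = (max a₀ (ϱbar / 2) + ϱbar) / 2 := ⟨_, rfl⟩
  have ha'lt : a' < ϱbar := by
    have h1 : max a₀ (ϱbar / 2) < ϱbar := max_lt ha₀ (by linarith)
    simp only [ha'def]; linarith
  have ha'gt : ϱbar / 2 < a' := by
    have h1 : ϱbar / 2 ≤ max a₀ (ϱbar / 2) := le_max_right _ _
    simp only [ha'def]; linarith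
  have ha₀a' : a₀ < a' := by
    have h1 : a₀ ≤ max a₀ (ϱbar / 2) := le_max_left _ _
    simp only [ha'def]; linarith
  have ha'mem : a' ∈ Set.Ioo (0:ℝ) ϱbar := ⟨by linarith, ha'lt⟩
  obtain ⟨κ, hκdef⟩ : ∃ x : ℝ, x = c₀ / (2 * ϱbar * (β - 1)) := ⟨_, rfl⟩
  have hκ : 0 < κ := by
    rw [hκdef]
    apply div_pos hc₀
    have : (0:ℝ) < β - 1 := by linarith
    positivity
  -- lower bound for H near ϱbar
  have hHlow : ∀ ρ ∈ Set.Ico a' ϱbar,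
      κ * ((ϱbar - ρ) ^ (1 - β) - (ϱbar - a') ^ (1 - β)) ≤ H ρ := by
    intro ρ hρ
    have hρmem : ρ ∈ Set.Ioo 0 ϱbar := ⟨by linarith [hρ.1], hρ.2⟩
    have ha'ρ : a' ≤ ρ := hρ.1
    -- continuity of the comparison integrand
    have hφc : ContinuousOn (fun z => (ϱbar - z) ^ (-β)) (Set.Iio ϱbar) := by
      intro z hz
      have hne : ϱbar - z ≠ 0 := ne_of_gt (sub_pos.2 hz)
      exact ((Real.continuousAt_rpow_const _ _ (Or.inl hne)).comp
        ((continuous_const.sub continuous_id).continuousAt)).continuousWithinAt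
    have hIccIio : Set.Icc a' ρ ⊆ Set.Iio ϱbar := fun z hz => lt_of_le_of_lt hz.2 hρ.2
    have hφint : IntervalIntegrable (fun z => (ϱbar - z) ^ (-β)) volume a' ρ := by
      apply ContinuousOn.intervalIntegrable
      rw [Set.uIcc_of_le ha'ρ]
      exact hφc.mono hIccIio
    -- split I ρ
    have hsplit : I (a') + ∫ z in a'..ρ, h z / z ^ 2 = I ρ := by
      simp only [hIdef]
      exact intervalIntegral.integral_add_adjacent_intervals (hgint _ _ hb2 ha'mem)
        (hgint _ _ ha'mem hρmem)
    have hP1 : 0 ≤ I a' := by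
      simp only [hIdef]
      apply intervalIntegral.integral_nonneg (by linarith)
      intro u hu
      have hum : u ∈ Set.Ioo (0:ℝ) ϱbar := ⟨lt_of_lt_of_le hb2.1 hu.1, lt_of_le_of_lt hu.2 ha'lt⟩
      have := hpos u hum
      positivity
    -- pointwise comparison on [a', ρ]
    have hcomp : ∀ z ∈ Set.Icc a' ρ, c₀ / ϱbar ^ 2 * (ϱbar - z) ^ (-β) ≤ h z / z ^ 2 := by
      intro z hz
      have hzm : z ∈ Set.Ioo (0:ℝ) ϱbar := ⟨by linarith [hz.1], lt_of_le_of_lt hz.2 hρ.2⟩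
      have hz2 : 0 < ϱbar - z := sub_pos.2 hzm.2
      have hzIoo : z ∈ Set.Ioo a₀ ϱbar := ⟨lt_of_lt_of_le ha₀a' hz.1, hzm.2⟩
      have hzb := hIoo hzIoo
      have hpow : (0:ℝ) < (ϱbar - z) ^ β := Real.rpow_pos_of_pos hz2 β
      have hhz : c₀ * (ϱbar - z) ^ (-β) ≤ h z := by
        rw [Real.rpow_neg hz2.le]
        rw [Set.mem_setOf_eq] at hzb
        calc c₀ * ((ϱbar - z) ^ β)⁻¹ ≤ (h z * (ϱbar - z) ^ β) * ((ϱbar - z) ^ β)⁻¹ := by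
              apply mul_le_mul_of_nonneg_right hzb (by positivity)
          _ = h z := by field_simp
      have hz2b : z ^ 2 ≤ ϱbar ^ 2 := by nlinarith [hzm.1, hzm.2]
      have hzpos : (0:ℝ) < z ^ 2 := by nlinarith [hzm.1]
      calc c₀ / ϱbar ^ 2 * (ϱbar - z) ^ (-β) = c₀ * (ϱbar - z) ^ (-β) / ϱbar ^ 2 := by ring
        _ ≤ h z / ϱbar ^ 2 := by
            apply div_le_div_of_nonneg_right ?_ (by positivity)
            exact hhz
        _ ≤ h z / z ^ 2 := by
            apply div_le_div_of_nonneg_left (hpos z hzm).le hzpos hz2b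
    have hmono_int : ∫ z in a'..ρ, c₀ / ϱbar ^ 2 * (ϱbar - z) ^ (-β) ≤
        ∫ z in a'..ρ, h z / z ^ 2 := by
      apply intervalIntegral.integral_mono_on ha'ρ (hφint.const_mul _) (hgint _ _ ha'mem hρmem)
      exact hcomp
    -- compute the comparison integral
    have hcalc : ∫ z in a'..ρ, (ϱbar - z) ^ (-β) =
        ((ϱbar - ρ) ^ (1 - β) - (ϱbar - a') ^ (1 - β)) / (β - 1) := by
      have hanti : ∀ z ∈ Set.uIcc a' ρ,
          HasDerivAt (fun y => (ϱbar - y) ^ (1 - β) / (β - 1)) ((ϱbar - z) ^ (-β)) z := by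
        intro z hz
        rw [Set.uIcc_of_le ha'ρ] at hz
        have hz2 : 0 < ϱbar - z := sub_pos.2 (hIccIio hz)
        have h1 : HasDerivAt (fun y : ℝ => ϱbar - y) (-1) z := by
          simpa using (hasDerivAt_const z ϱbar).fun_sub (hasDerivAt_id z)
        have h2 : HasDerivAt (fun x : ℝ => x ^ (1 - β)) ((1 - β) * (ϱbar - z) ^ (1 - β - 1))
            (ϱbar - z) := Real.hasDerivAt_rpow_const (Or.inl (ne_of_gt hz2))
        have h3 := (h2.comp z h1).div_const (β - 1)
        refine h3.congr_deriv ?_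
        have hβ1 : β - 1 ≠ 0 := by intro hc; rw [sub_eq_zero] at hc; linarith [hβ]
        field_simp
        ring
      rw [intervalIntegral.integral_eq_sub_of_hasDerivAt hanti hφint]
      ring
    have hXnn : 0 ≤ (ϱbar - ρ) ^ (1 - β) - (ϱbar - a') ^ (1 - β) := by
      have h1 : (ϱbar - a') ^ (1-β) ≤ (ϱbar - ρ) ^ (1-β) :=
        Real.rpow_le_rpow_of_nonpos (by linarith [hρ.2]) (by linarith) (by linarith)
      linarith
    have hBle : c₀ / ϱbar ^ 2 * (((ϱbar - ρ) ^ (1 - β) - (ϱbar - a') ^ (1 - β)) / (β - 1)) ≤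
        ∫ z in a'..ρ, h z / z ^ 2 := by
      calc c₀ / ϱbar ^ 2 * (((ϱbar - ρ) ^ (1 - β) - (ϱbar - a') ^ (1 - β)) / (β - 1))
          = ∫ z in a'..ρ, c₀ / ϱbar ^ 2 * (ϱbar - z) ^ (-β) := by
            rw [intervalIntegral.integral_const_mul, hcalc]
        _ ≤ _ := hmono_int
    have hB0 : 0 ≤ c₀ / ϱbar ^ 2 * (((ϱbar - ρ) ^ (1 - β) - (ϱbar - a') ^ (1 - β)) / (β - 1)) := by
      apply mul_nonneg (div_nonneg hc₀.le (by positivity))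
      exact div_nonneg hXnn (by linarith)
    have hIρ : c₀ / ϱbar ^ 2 * (((ϱbar - ρ) ^ (1 - β) - (ϱbar - a') ^ (1 - β)) / (β - 1)) ≤ I ρ := by
      linarith
    rw [hHI ρ]
    have hstep : (ϱbar / 2) * (c₀ / ϱbar ^ 2 *
        (((ϱbar - ρ) ^ (1 - β) - (ϱbar - a') ^ (1 - β)) / (β - 1))) ≤ ρ * I ρ :=
      mul_le_mul (by linarith [hρ.1]) hIρ hB0 (by linarith [hρmem.1])
    have heqκ : κ * ((ϱbar - ρ) ^ (1 - β) - (ϱbar - a') ^ (1 - β)) = (ϱbar / 2) * (c₀ / ϱbar ^ 2 *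
        (((ϱbar - ρ) ^ (1 - β) - (ϱbar - a') ^ (1 - β)) / (β - 1))) := by
      rw [hκdef]
      exact kappa_eq _ _ _ _ (ne_of_gt hϱ) (by intro hc; rw [sub_eq_zero] at hc; linarith)
    rw [heqκ]
    exact hstep
  -- rpow tendsto at 0+
  have hrt : Tendsto (fun t : ℝ => t ^ (1 - β)) (nhdsWithin 0 (Set.Ioi 0)) atTop := by
    have h1 : Tendsto (fun t : ℝ => t ^ (β - 1)) (nhdsWithin 0 (Set.Ioi 0))
        (nhdsWithin 0 (Set.Ioi 0)) := by
      rw [tendsto_nhdsWithin_iff]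
      constructor
      · have hc : ContinuousAt (fun t : ℝ => t ^ (β - 1)) 0 :=
          Real.continuousAt_rpow_const 0 (β - 1) (Or.inr (by linarith))
        have h0' : (0:ℝ) ^ (β - 1) = 0 := Real.zero_rpow (by intro hc'; linarith [hc'])
        have := hc.tendsto
        rw [h0'] at this
        exact this.mono_left nhdsWithin_le_nhds
      · filter_upwards [self_mem_nhdsWithin] with t ht
        exact Real.rpow_pos_of_pos ht (β - 1)
    have h2 := tendsto_inv_nhdsGT_zero.comp h1
    refine h2.congr' ?_
    filter_upwards [self_mem_nhdsWithin] with t ht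
    simp only [Function.comp]
    rw [← Real.rpow_neg (le_of_lt ht)]
    norm_num
  -- choose α₁
  obtain ⟨R, hRdef⟩ : ∃ x : ℝ, x = 2 * K * ϱbar / κ + (ϱbar - a') ^ (1 - β) := ⟨_, rfl⟩
  obtain ⟨α₁, hα₁δ, hα₁α₀, hα₁a', hα₁K, hα₁R, hα₁pos⟩ :
      ∃ t : ℝ, t < δ ∧ t < α₀ ∧ t ≤ ϱbar - a' ∧
        t * (M₀ / δ + K) < h α₀ / 4 ∧ R ≤ t ^ (1 - β) ∧ 0 < t := by
    have e1 : ∀ᶠ t in nhdsWithin (0:ℝ) (Set.Ioi 0), t < δ :=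
      eventually_nhdsWithin_of_eventually_nhds (eventually_lt_nhds hδmem.1)
    have e2 : ∀ᶠ t in nhdsWithin (0:ℝ) (Set.Ioi 0), t < α₀ :=
      eventually_nhdsWithin_of_eventually_nhds (eventually_lt_nhds hα₀)
    have e3 : ∀ᶠ t in nhdsWithin (0:ℝ) (Set.Ioi 0), t ≤ ϱbar - a' :=
      eventually_nhdsWithin_of_eventually_nhds
        ((eventually_lt_nhds (by linarith : (0:ℝ) < ϱbar - a')).mono fun x hx => hx.le)
    have e4 : ∀ᶠ t in nhdsWithin (0:ℝ) (Set.Ioi 0), t * (M₀ / δ + K) < h α₀ / 4 := by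
      have ht : Tendsto (fun t : ℝ => t * (M₀ / δ + K)) (nhds 0) (nhds 0) := by
        have := (tendsto_id : Tendsto id (nhds (0:ℝ)) (nhds 0)).mul_const (M₀ / δ + K)
        simpa using this
      exact eventually_nhdsWithin_of_eventually_nhds
        (ht.eventually_lt_const (by linarith))
    have e5 : ∀ᶠ t in nhdsWithin (0:ℝ) (Set.Ioi 0), R ≤ t ^ (1 - β) :=
      hrt.eventually_ge_atTop R
    have e6 : ∀ᶠ t in nhdsWithin (0:ℝ) (Set.Ioi 0), (0:ℝ) < t :=
      eventually_mem_nhdsWithin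
    have eall := ((((e1.and e2).and e3).and e4).and e5).and e6
    obtain ⟨t, ⟨⟨⟨⟨p1, p2⟩, p3⟩, p4⟩, p5⟩, p6⟩ := eall.exists
    exact ⟨t, p1, p2, p3, p4, p5, p6⟩
  have hα₁half : α₁ < ϱbar / 2 := by linarith
  have hAsub : Set.Icc α₁ (ϱbar - α₁) ⊆ Set.Ioo 0 ϱbar := fun x hx =>
    ⟨lt_of_lt_of_le hα₁pos hx.1, lt_of_le_of_lt hx.2 (by linarith)⟩
  have hAne : (Set.Icc α₁ (ϱbar - α₁)).Nonempty := ⟨α₁, le_rfl, by linarith⟩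
  have hqcont : ContinuousOn (fun x => deriv h x / x) (Set.Icc α₁ (ϱbar - α₁)) :=
    (hdh_cont.mono hAsub).div continuousOn_id (fun x hx => ne_of_gt (hAsub hx).1)
  obtain ⟨x₀, hx₀mem, hx₀min'⟩ := isCompact_Icc.exists_isMinOn hAne hqcont
  have hx₀min : ∀ x ∈ Set.Icc α₁ (ϱbar - α₁), deriv h x₀ / x₀ ≤ deriv h x / x :=
    fun x hx => hx₀min' hx
  obtain ⟨c, hcdef⟩ : ∃ x : ℝ, x = (deriv h x₀ / x₀) / 2 := ⟨_, rfl⟩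
  have hc : 0 < c := by
    rw [hcdef]
    have := div_pos (hh' x₀ (hAsub hx₀mem)) (hAsub hx₀mem).1
    linarith
  refine ⟨α₁, ⟨hα₁pos, hα₁α₀⟩, c, hc, ?_⟩
  intro r hr ρ hρ
  have hrmem : r ∈ Set.Ioo 0 ϱbar := hsub hr
  have hDr : deriv H r = D r := by rw [hDdef]; exact hderivH r hrmem
  have hrD : r * D r - H r = h r := hident r hrmem
  have hhr : 0 < h r := hpos r hrmem
  have hhα₀r : h α₀ ≤ h r :=
    hmono.monotoneOn ⟨hα₀.le, by linarith⟩ ⟨by linarith [hrmem.1], hrmem.2⟩ hr.1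
  rw [hDr]
  refine ⟨?_, ?_, ?_⟩
  · -- part (i)
    intro h1 h2
    have hrA : r ∈ Set.Icc α₁ (ϱbar - α₁) := ⟨by linarith [hr.1], by linarith [hr.2]⟩
    have hρA : ρ ∈ Set.Icc α₁ (ϱbar - α₁) := ⟨h1, h2⟩
    have hψmono : MonotoneOn (fun x => D x - 2 * c * x) (Set.Icc α₁ (ϱbar - α₁)) := by
      apply monotoneOn_of_deriv_nonneg (convex_Icc _ _)
      · exact (hDcont.mono hAsub).sub ((continuous_const.mul continuous_id).continuousOn)
      · intro x hx
        rw [interior_Icc] at hx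
        exact ((hDd x (hAsub (Set.Ioo_subset_Icc_self hx))).sub
          ((hasDerivAt_id x).const_mul (2 * c))).differentiableAt.differentiableWithinAt
      · intro x hx
        rw [interior_Icc] at hx
        have hxm := hAsub (Set.Ioo_subset_Icc_self hx)
        have hder : HasDerivAt (fun x => D x - 2 * c * x) (deriv h x / x - 2 * c * 1) x :=
          (hDd x hxm).sub ((hasDerivAt_id x).const_mul (2 * c))
        rw [hder.deriv]
        have h5 : deriv h x₀ / x₀ ≤ deriv h x / x := hx₀min x (Set.Ioo_subset_Icc_self hx)
        rw [hcdef]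
        linarith
    have hΦd : ∀ x ∈ Set.Ioo (0:ℝ) ϱbar,
        HasDerivAt (fun y => H y - D r * y - c * (y - r) ^ 2)
          ((D x - 2 * c * x) - (D r - 2 * c * r)) x := by
      intro x hx
      have h1' := ((hHd x hx).fun_sub ((hasDerivAt_id x).const_mul (D r))).fun_sub
        ((((hasDerivAt_id x).sub_const r).fun_pow 2).const_mul c)
      refine h1'.congr_deriv ?_
      simp only [hDdef]
      norm_num
      ring
    have hΦc : ContinuousOn (fun y => H y - D r * y - c * (y - r) ^ 2)
        (Set.Icc α₁ (ϱbar - α₁)) := fun x hx =>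
      (hΦd x (hAsub hx)).differentiableAt.continuousAt.continuousWithinAt
    have key : (fun y => H y - D r * y - c * (y - r) ^ 2) r ≤
        (fun y => H y - D r * y - c * (y - r) ^ 2) ρ := by
      rcases le_total r ρ with hle | hle
      · have hmono2 : MonotoneOn (fun y => H y - D r * y - c * (y - r) ^ 2)
            (Set.Icc r (ϱbar - α₁)) := by
          apply monotoneOn_of_deriv_nonneg (convex_Icc _ _)
          · exact hΦc.mono (Set.Icc_subset_Icc_left hrA.1)
          · intro x hx
            rw [interior_Icc] at hx
            have hxA : x ∈ Set.Icc α₁ (ϱbar - α₁) := ⟨by linarith [hrA.1, hx.1], hx.2.le⟩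
            exact (hΦd x (hAsub hxA)).differentiableAt.differentiableWithinAt
          · intro x hx
            rw [interior_Icc] at hx
            have hxA : x ∈ Set.Icc α₁ (ϱbar - α₁) := ⟨by linarith [hrA.1, hx.1], hx.2.le⟩
            rw [(hΦd x (hAsub hxA)).deriv]
            have h9 := hψmono hrA hxA hx.1.le
            change D r - 2 * c * r ≤ D x - 2 * c * x at h9
            linarith
        exact hmono2 ⟨le_rfl, by linarith [hr.2]⟩ ⟨hle, hρA.2⟩ hle
      · have hanti : AntitoneOn (fun y => H y - D r * y - c * (y - r) ^ 2)
            (Set.Icc α₁ r) := by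
          apply antitoneOn_of_deriv_nonpos (convex_Icc _ _)
          · exact hΦc.mono (Set.Icc_subset_Icc_right hrA.2)
          · intro x hx
            rw [interior_Icc] at hx
            have hxA : x ∈ Set.Icc α₁ (ϱbar - α₁) := ⟨hx.1.le, by linarith [hrA.2, hx.2]⟩
            exact (hΦd x (hAsub hxA)).differentiableAt.differentiableWithinAt
          · intro x hx
            rw [interior_Icc] at hx
            have hxA : x ∈ Set.Icc α₁ (ϱbar - α₁) := ⟨hx.1.le, by linarith [hrA.2, hx.2]⟩
            rw [(hΦd x (hAsub hxA)).deriv]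
            have h9 := hψmono hxA hrA hx.2.le
            change D x - 2 * c * x ≤ D r - 2 * c * r at h9
            linarith
        exact hanti ⟨hρA.1, hle⟩ ⟨hrA.1, le_rfl⟩ hle
    simp only [sub_self] at key
    nlinarith [key]
  · -- part (ii)
    intro hρα₁
    have hHρlb : -(h δ + α₁ * (M₀ / δ)) ≤ H ρ := by
      rcases eq_or_lt_of_le hρ.1 with hρ0 | hρ0
      · rw [← hρ0, hHI 0]
        have hδpos : 0 < h δ := hpos δ hδmem
        have : 0 < M₀ / δ := div_pos hM₀ hδmem.1
        nlinarith
      · have hρm : ρ ∈ Set.Ioo 0 ϱbar := ⟨hρ0, hρ.2⟩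
        have hρδ : ρ ≤ δ := le_trans hρα₁ hα₁δ.le
        have hinv : ∀ u v : ℝ, u ∈ Set.Ioo (0:ℝ) ϱbar → v ∈ Set.Ioo (0:ℝ) ϱbar → u ≤ v →
            ∫ z in u..v, (z ^ 2)⁻¹ = u⁻¹ - v⁻¹ := by
          intro u v hu hv huv
          have hderiv : ∀ z ∈ Set.uIcc u v, HasDerivAt (fun y : ℝ => -y⁻¹) ((z ^ 2)⁻¹) z := by
            intro z hz
            rw [Set.uIcc_of_le huv] at hz
            have hz0 : z ≠ 0 := ne_of_gt (lt_of_lt_of_le hu.1 hz.1)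
            simpa using (hasDerivAt_inv hz0).fun_neg
          have hint : IntervalIntegrable (fun z : ℝ => (z ^ 2)⁻¹) volume u v := by
            apply ContinuousOn.intervalIntegrable
            rw [Set.uIcc_of_le huv]
            intro z hz
            have hz0 : z ≠ 0 := ne_of_gt (lt_of_lt_of_le hu.1 hz.1)
            exact ((continuous_pow 2).continuousAt.inv₀ (pow_ne_zero 2 hz0)).continuousWithinAt
          rw [intervalIntegral.integral_eq_sub_of_hasDerivAt hderiv hint]
          ring
        have hbound : ∀ u v w : ℝ, u ∈ Set.Ioo (0:ℝ) ϱbar → v ∈ Set.Ioo (0:ℝ) ϱbar → u ≤ v →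
            (∀ z ∈ Set.Icc u v, h z ≤ w) → (0 ≤ w) →
            ∫ z in u..v, h z / z ^ 2 ≤ w * (u⁻¹ - v⁻¹) := by
          intro u v w hu hv huv hw hw0
          have hle : ∫ z in u..v, h z / z ^ 2 ≤ ∫ z in u..v, w * (z ^ 2)⁻¹ := by
            apply intervalIntegral.integral_mono_on huv (hgint _ _ hu hv)
            · apply ContinuousOn.intervalIntegrable
              rw [Set.uIcc_of_le huv]
              intro z hz
              have hz0 : z ≠ 0 := ne_of_gt (lt_of_lt_of_le hu.1 hz.1)
              exact (continuousAt_const.mul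
                ((continuous_pow 2).continuousAt.inv₀ (pow_ne_zero 2 hz0))).continuousWithinAt
            · intro z hz
              have hz0 : 0 < z := lt_of_lt_of_le hu.1 hz.1
              rw [div_eq_mul_inv]
              have hz2 : (0:ℝ) ≤ (z ^ 2)⁻¹ := inv_nonneg.2 (sq_nonneg z)
              exact mul_le_mul_of_nonneg_right (hw z hz) hz2
          rw [intervalIntegral.integral_const_mul] at hle
          rw [hinv u v hu hv huv] at hle
          exact hle
        have hJ1 : ∫ z in ρ..δ, h z / z ^ 2 ≤ h δ * (ρ⁻¹ - δ⁻¹) := by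
          apply hbound ρ δ (h δ) hρm hδmem hρδ ?_ (hpos δ hδmem).le
          intro z hz
          exact hmono.monotoneOn ⟨by linarith [hρm.1, hz.1], by linarith [hδmem.2, hz.2]⟩
            ⟨hδmem.1.le, hδmem.2⟩ hz.2
        have hJ2 : ∫ z in δ..(ϱbar/2), h z / z ^ 2 ≤ M₀ * (δ⁻¹ - (ϱbar/2)⁻¹) := by
          apply hbound δ (ϱbar/2) M₀ hδmem hb2 (by linarith [hδα₀]) ?_ hM₀.le
          intro z hz
          rw [hM₀def]
          exact hmono.monotoneOn ⟨by linarith [hδmem.1, hz.1], by linarith [hb2.2, hz.2]⟩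
            ⟨hb2.1.le, hb2.2⟩ hz.2
        have hs2 : (∫ z in ρ..δ, h z / z ^ 2) + ∫ z in δ..(ϱbar/2), h z / z ^ 2 =
            ∫ z in ρ..(ϱbar/2), h z / z ^ 2 :=
          intervalIntegral.integral_add_adjacent_intervals (hgint _ _ hρm hδmem)
            (hgint _ _ hδmem hb2)
        have hIs : I ρ = -∫ z in ρ..(ϱbar/2), h z / z ^ 2 := by
          simp only [hIdef]
          exact intervalIntegral.integral_symm _ _
        have hIlb : -(h δ * ρ⁻¹ + M₀ * δ⁻¹) ≤ I ρ := by
          rw [hIs]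
          have hδinv : 0 ≤ δ⁻¹ := inv_nonneg.2 hδmem.1.le
          have hbinv : 0 ≤ (ϱbar/2)⁻¹ := inv_nonneg.2 (by linarith)
          have hhδ : 0 ≤ h δ := (hpos δ hδmem).le
          nlinarith [hJ1, hJ2, hs2]
        rw [hHI ρ]
        have hmul := mul_le_mul_of_nonneg_left hIlb hρm.1.le
        have hρinv : ρ * ρ⁻¹ = 1 := mul_inv_cancel₀ (ne_of_gt hρm.1)
        have hexp : ρ * -(h δ * ρ⁻¹ + M₀ * δ⁻¹) = -(h δ * (ρ * ρ⁻¹) + ρ * (M₀ / δ)) := by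
          rw [div_eq_mul_inv]
          ring
        rw [hexp, hρinv] at hmul
        have hρM : ρ * (M₀ / δ) ≤ α₁ * (M₀ / δ) := by
          apply mul_le_mul_of_nonneg_right hρα₁ (div_pos hM₀ hδmem.1).le
        linarith
    have hDrρ : D r * ρ ≤ K * α₁ := by
      calc D r * ρ ≤ |D r| * ρ := mul_le_mul_of_nonneg_right (le_abs_self _) hρ.1
        _ ≤ K * α₁ := mul_le_mul (hK r hr) hρα₁ hρ.1 hK0
    have hsum : α₁ * (M₀ / δ) + K * α₁ = α₁ * (M₀ / δ + K) := by ring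
    linarith
  · -- part (iii)
    intro hρge
    have hρa' : ρ ∈ Set.Ico a' ϱbar := ⟨by linarith, hρ.2⟩
    have hlow := hHlow ρ hρa'
    have hrp : α₁ ^ (1 - β) ≤ (ϱbar - ρ) ^ (1 - β) :=
      Real.rpow_le_rpow_of_nonpos (by linarith [hρ.2]) (by linarith) (by linarith)
    have hH2K : 2 * K * ϱbar ≤ H ρ := by
      have h6 : 2 * K * ϱbar / κ ≤ (ϱbar - ρ) ^ (1 - β) - (ϱbar - a') ^ (1 - β) := by
        rw [hRdef] at hα₁R
        linarith
      have h7 := mul_le_mul_of_nonneg_left h6 hκ.le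
      rw [mul_div_cancel₀ _ (ne_of_gt hκ)] at h7
      linarith
    have hDrρ : D r * ρ ≤ K * ϱbar := by
      calc D r * ρ ≤ |D r| * ρ := mul_le_mul_of_nonneg_right (le_abs_self _) hρ.1
        _ ≤ K * ϱbar := mul_le_mul (hK r hr) hρ.2.le hρ.1 hK0
    linarith
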